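/- Cycle Bias Lemma: Under (UG), (BV), L-smoothness of F, L_i-smoothness of each F_i, and bounded heterogeneity, if γ_max ≤ 1/(2 K L ρ), then the cycle biases satisfy Σ_{m=0}^{M−1} E[‖b_m‖²] ≤ 2 A² K² L_max² M (σ² + ζ²) + 4 A² K² L_max² ρ² Σ_{m=0}^{M−1} E[‖∇F(x^m)‖²]. -/

import Mathlib

open MeasureTheory Finset

set_option maxHeartbeats 1000000

section Helpers

variable {Ω : Type} {m0 : MeasurableSpace Ω} {μ : MeasureTheory.Measure Ω} {d : ℕ}

private lemma abs_coord_le_norm (x : EuclideanSpace ℝ (Fin d)) (j : Fin d) : |x j| ≤ ‖x‖ := by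
  rw [EuclideanSpace.norm_eq, ← Real.sqrt_sq_eq_abs]
  apply Real.sqrt_le_sqrt
  have h := Finset.single_le_sum (f := fun i => ‖x i‖ ^ 2) (fun i _ => sq_nonneg _)
    (Finset.mem_univ j)
  simpa [Real.norm_eq_abs, sq_abs] using h

private lemma memLp_coord {f : Ω → EuclideanSpace ℝ (Fin d)} (hf : MemLp f 2 μ) (j : Fin d) :
    MemLp (fun ω => f ω j) 2 μ := by
  have hmeas : AEStronglyMeasurable (fun ω => f ω j) μ := by
    have := (EuclideanSpace.proj (𝕜 := ℝ) j).continuous.comp_aestronglyMeasurable hf.1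
    simpa [Function.comp] using this
  refine hf.norm.of_le hmeas (Filter.Eventually.of_forall fun ω => ?_)
  simp only [Real.norm_eq_abs, abs_of_nonneg (norm_nonneg (f ω))]
  exact abs_coord_le_norm (f ω) j

private lemma integrable_mul2 {a b : Ω → ℝ} (ha : MemLp a 2 μ) (hb : MemLp b 2 μ) :
    Integrable (fun ω => a ω * b ω) μ := by
  have h : MemLp (b • a) 1 μ := MemLp.smul ha hb (hpqr := ⟨by simp only [inv_one]; exact ENNReal.inv_two_add_inv_two⟩)
  have h2 : Integrable (b • a) μ := memLp_one_iff_integrable.mp h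
  have : (fun ω => a ω * b ω) = b • a := by
    funext ω; simp [Pi.smul_apply, smul_eq_mul, mul_comm]
  rw [this]; exact h2

private lemma integrable_coord {q : Ω → EuclideanSpace ℝ (Fin d)} (hq : Integrable q μ)
    (j : Fin d) : Integrable (fun ω => q ω j) μ := by
  refine hq.norm.mono' ?_ (Filter.Eventually.of_forall fun ω => ?_)
  · have := (EuclideanSpace.proj (𝕜 := ℝ) j).continuous.comp_aestronglyMeasurable hq.1
    simpa [Function.comp] using this
  · simpa [Real.norm_eq_abs] using abs_coord_le_norm (q ω) j

private lemma setIntegral_coord (q : Ω → EuclideanSpace ℝ (Fin d)) (s : Set Ω)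
    (hq : IntegrableOn q s μ) (j : Fin d) :
    ∫ ω in s, q ω j ∂μ = (∫ ω in s, q ω ∂μ) j := by
  have := ContinuousLinearMap.integral_comp_comm (EuclideanSpace.proj (𝕜 := ℝ) j) hq
  simpa using this

private lemma condexp_coord {m : MeasurableSpace Ω} (hm : m ≤ m0) [IsFiniteMeasure μ]
    {f : Ω → EuclideanSpace ℝ (Fin d)} (hf : Integrable f μ) (j : Fin d) :
    (fun ω => (μ[f|m]) ω j) =ᵐ[μ] μ[fun ω => f ω j|m] := by
  have hcei : Integrable (μ[f|m]) μ := integrable_condExp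
  refine ae_eq_condExp_of_forall_setIntegral_eq hm (integrable_coord hf j) ?_ ?_ ?_
  · intro s _ _
    exact (integrable_coord hcei j).restrict
  · intro s hs hμs
    rw [setIntegral_coord _ s hcei.restrict j, setIntegral_coord _ s hf.restrict j,
      setIntegral_condExp hm hf hs]
  · exact StronglyMeasurable.aestronglyMeasurable ((EuclideanSpace.proj (𝕜 := ℝ) j).continuous.comp_stronglyMeasurable
      (stronglyMeasurable_condExp (m := m) (μ := μ) (f := f)))

private lemma integral_sq_norm_eq {m : MeasurableSpace Ω} (hm : m ≤ m0) [IsProbabilityMeasure μ]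
    {f h : Ω → EuclideanSpace ℝ (Fin d)} (hf : MemLp f 2 μ) (hh : MemLp h 2 μ)
    (hhm : StronglyMeasurable[m] h) (hce : μ[f|m] =ᵐ[μ] h) :
    ∫ ω, ‖f ω‖ ^ 2 ∂μ = (∫ ω, ‖f ω - h ω‖ ^ 2 ∂μ) + ∫ ω, ‖h ω‖ ^ 2 ∂μ := by
  have hfi : Integrable f μ := hf.integrable one_le_two
  have hhi : Integrable h μ := hh.integrable one_le_two
  -- cross term vanishes
  have hcross : ∫ ω, (inner ℝ (f ω - h ω) (h ω) : ℝ) ∂μ = 0 := by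
    have hint : ∀ j : Fin d, Integrable (fun ω => (f ω j - h ω j) * h ω j) μ :=
      fun j => integrable_mul2 ((memLp_coord hf j).sub (memLp_coord hh j)) (memLp_coord hh j)
    have hinner : ∀ ω, (inner ℝ (f ω - h ω) (h ω) : ℝ)
        = ∑ j : Fin d, (f ω j - h ω j) * h ω j := by
      intro ω
      rw [PiLp.inner_apply]
      refine Finset.sum_congr rfl fun j _ => ?_
      simp [RCLike.inner_apply, PiLp.sub_apply, mul_comm]
    rw [integral_congr_ae (Filter.Eventually.of_forall hinner),
      integral_finset_sum _ (fun j _ => hint j)]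
    refine Finset.sum_eq_zero fun j _ => ?_
    -- coordinate cross term
    have hH1m : StronglyMeasurable[m] (fun ω => h ω j) := by
      have := (EuclideanSpace.proj (𝕜 := ℝ) j).continuous.comp_stronglyMeasurable hhm
      simpa [Function.comp] using this
    have hH1i : Integrable (fun ω => h ω j) μ := (memLp_coord hh j).integrable one_le_two
    have hF1i : Integrable (fun ω => f ω j) μ := (memLp_coord hf j).integrable one_le_two
    have hW0 : μ[fun ω => f ω j - h ω j|m] =ᵐ[μ] 0 := by
      have h1 : μ[fun ω => f ω j - h ω j|m]
          =ᵐ[μ] μ[fun ω => f ω j|m] - μ[fun ω => h ω j|m] := condExp_sub hF1i hH1i m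
      have h2 : μ[fun ω => f ω j|m] =ᵐ[μ] fun ω => h ω j := by
        have h3 := (condexp_coord hm hfi j).symm
        have h4 : (fun ω => (μ[f|m]) ω j) =ᵐ[μ] fun ω => h ω j :=
          hce.mono fun ω hω => congrArg (fun v => v j) hω
        exact h3.trans h4
      have h5 : μ[fun ω => h ω j|m] = fun ω => h ω j :=
        condExp_of_stronglyMeasurable hm hH1m hH1i
      refine h1.trans ?_
      rw [h5]
      filter_upwards [h2] with ω hω
      simp [hω]
    have hmul : μ[fun ω => h ω j * (f ω j - h ω j)|m]
        =ᵐ[μ] (fun ω => h ω j) * μ[fun ω => f ω j - h ω j|m] := by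
      have hprod : Integrable ((fun ω => h ω j) * fun ω => f ω j - h ω j) μ := by
        have := integrable_mul2 (memLp_coord hh j)
          ((memLp_coord hf j).sub (memLp_coord hh j))
        exact this
      exact condExp_mul_of_stronglyMeasurable_left hH1m hprod (hF1i.sub hH1i)
    have hmul0 : μ[fun ω => h ω j * (f ω j - h ω j)|m] =ᵐ[μ] 0 := by
      refine hmul.trans ?_
      filter_upwards [hW0] with ω hω
      simp only [Pi.mul_apply, hω, Pi.zero_apply, mul_zero]
    have hprodInt : Integrable (fun ω => h ω j * (f ω j - h ω j)) μ := by
      have := integrable_mul2 (memLp_coord hh j) ((memLp_coord hf j).sub (memLp_coord hh j))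
      simpa using this
    have : ∫ ω, (f ω j - h ω j) * h ω j ∂μ = ∫ ω, h ω j * (f ω j - h ω j) ∂μ := by
      simp [mul_comm]
    rw [this, ← integral_condExp hm (f := fun ω => h ω j * (f ω j - h ω j)),
      integral_congr_ae hmul0]
    simp
  have hexp : ∀ ω, ‖f ω‖ ^ 2
      = ‖f ω - h ω‖ ^ 2 + 2 * (inner ℝ (f ω - h ω) (h ω) : ℝ) + ‖h ω‖ ^ 2 := by
    intro ω
    have := norm_add_sq_real (f ω - h ω) (h ω)
    simpa [sub_add_cancel] using this
  have hint1 : Integrable (fun ω => ‖f ω - h ω‖ ^ 2) μ := (hf.sub hh).norm.integrable_sq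
  have hint2 : Integrable (fun ω => (inner ℝ (f ω - h ω) (h ω) : ℝ)) μ := by
    have hinner : ∀ ω, (inner ℝ (f ω - h ω) (h ω) : ℝ)
        = ∑ j : Fin d, (f ω j - h ω j) * h ω j := by
      intro ω
      rw [PiLp.inner_apply]
      refine Finset.sum_congr rfl fun j _ => ?_
      simp [RCLike.inner_apply, PiLp.sub_apply, mul_comm]
    have : Integrable (fun ω => ∑ j : Fin d, (f ω j - h ω j) * h ω j) μ :=
      integrable_finset_sum _ fun j _ =>
        integrable_mul2 ((memLp_coord hf j).sub (memLp_coord hh j)) (memLp_coord hh j)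
    exact this.congr (Filter.Eventually.of_forall fun ω => (hinner ω).symm)
  have hint3 : Integrable (fun ω => ‖h ω‖ ^ 2) μ := hh.norm.integrable_sq
  calc ∫ ω, ‖f ω‖ ^ 2 ∂μ
      = ∫ ω, (‖f ω - h ω‖ ^ 2 + 2 * (inner ℝ (f ω - h ω) (h ω) : ℝ) + ‖h ω‖ ^ 2) ∂μ :=
        integral_congr_ae (Filter.Eventually.of_forall hexp)
    _ = (∫ ω, (‖f ω - h ω‖ ^ 2 + 2 * (inner ℝ (f ω - h ω) (h ω) : ℝ)) ∂μ)
        + ∫ ω, ‖h ω‖ ^ 2 ∂μ := integral_add (hint1.add (hint2.const_mul 2)) hint3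
    _ = (∫ ω, ‖f ω - h ω‖ ^ 2 ∂μ) + (∫ ω, 2 * (inner ℝ (f ω - h ω) (h ω) : ℝ) ∂μ)
        + ∫ ω, ‖h ω‖ ^ 2 ∂μ := by rw [integral_add hint1 (hint2.const_mul 2)]
    _ = (∫ ω, ‖f ω - h ω‖ ^ 2 ∂μ) + ∫ ω, ‖h ω‖ ^ 2 ∂μ := by
        rw [integral_const_mul, hcross]; ring

end Helpers


/-- **Cycle Bias Lemma.**
Asynchronous SGD with cyclic update schedule (flattened iteration index `t = m*K + k`):
`n` workers with computation times `τ i > 0` satisfying the harmonic-periods condition,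
worker `i` delivering `Ki i = τmax / τ i` gradients per cycle of `K` inner iterations
following the (K-periodic) schedule `ι`; the server updates `z (t+1) = z t − γ (ι t) • g t`
from `z 0 = x⁰`; the stale model `y t` is the server iterate seen by worker `ι t` at its
previous delivery (an earlier server iterate at most `K` updates in the past).  Under (UG),
(BV), `L`-smoothness of `F = (1/n) ∑ i, F i`, `Li i`-smoothness of each `F i` with
`Lmax = max_i Li i`, bounded heterogeneity, and `γmax ≤ 1/(2 K L ρ)`, the cycle biases
`b_m = ∑_{k<K} γ_{i_k} (∇F_{i_k}(y_{k,i_k}^m) − ∇F_{i_k}(x^m))` satisfy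
`∑_{m<M} E[‖b_m‖²] ≤ 2 A² K² Lmax² M (σ² + ζ²)
  + 4 A² K² Lmax² ρ² ∑_{m<M} E[‖∇F(x^m)‖²]` with `A = ∑_{k<K} γ_{i_k}²`. -/
theorem cycle_bias_lemma
    {d n : ℕ} (hn : 0 < n)
    {Ω : Type} {m0 : MeasurableSpace Ω} (μ : Measure Ω) [IsProbabilityMeasure μ]
    (Floc : Fin n → EuclideanSpace ℝ (Fin d) → ℝ)
    (hdiff : ∀ i, Differentiable ℝ (Floc i))
    (F : EuclideanSpace ℝ (Fin d) → ℝ)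
    (hF : ∀ x, F x = (1 / (n : ℝ)) * ∑ i, Floc i x)
    (τ : Fin n → ℝ) (hτpos : ∀ i, 0 < τ i)
    (hharm : ∀ i j, (∃ q : ℕ, τ i = (q : ℝ) * τ j) ∨ (∃ q : ℕ, τ j = (q : ℝ) * τ i))
    (τmax : ℝ) (hτmax : IsGreatest (Set.range τ) τmax)
    (Ki : Fin n → ℕ) (hKi : ∀ i, (Ki i : ℝ) = τmax / τ i)
    (K : ℕ) (hK : K = ∑ i, Ki i)
    (ι : ℕ → Fin n) (hιper : ∀ t, ι (t + K) = ι t)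
    (hιcount : ∀ i, ((Finset.range K).filter fun k => ι k = i).card = Ki i)
    (γ : Fin n → ℝ) (hγpos : ∀ i, 0 < γ i)
    (ℱ : ℕ → MeasurableSpace Ω) (hℱmono : Monotone ℱ) (hℱle : ∀ t, ℱ t ≤ m0)
    (g y z : ℕ → Ω → EuclideanSpace ℝ (Fin d))
    (x0 : EuclideanSpace ℝ (Fin d)) (hz0 : ∀ ω, z 0 ω = x0)
    (hzrec : ∀ t ω, z (t + 1) ω = z t ω - γ (ι t) • g t ω)
    (hy0 : ∀ t, (∀ s < t, ι s ≠ ι t) → y t = z 0)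
    (hyprev : ∀ s t, s < t → ι s = ι t → (∀ u, s < u → u < t → ι u ≠ ι t) →
        y t = z (s + 1))
    (hg2 : ∀ t, MemLp (g t) 2 μ)
    (hgmeas : ∀ t, StronglyMeasurable[ℱ (t + 1)] (g t))
    (hymeas : ∀ t, StronglyMeasurable[ℱ t] (y t))
    (hzmeas : ∀ t, StronglyMeasurable[ℱ t] (z t))
    (σ : ℝ)
    (hUG : ∀ t, μ[g t | ℱ t] =ᵐ[μ] fun ω => gradient (Floc (ι t)) (y t ω))
    (hBV : ∀ t, μ[(fun ω => ‖g t ω - gradient (Floc (ι t)) (y t ω)‖ ^ 2) | ℱ t]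
        ≤ᵐ[μ] fun _ => σ ^ 2)
    (L : ℝ)
    (hL : ∀ x x', ‖gradient F x - gradient F x'‖ ≤ L * ‖x - x'‖)
    (Li : Fin n → ℝ)
    (hLi : ∀ i x x', ‖gradient (Floc i) x - gradient (Floc i) x'‖ ≤ Li i * ‖x - x'‖)
    (Lmax : ℝ) (hLmax : IsGreatest (Set.range Li) Lmax)
    (ζ ρ : ℝ) (hζ : 0 ≤ ζ) (hρ : 0 ≤ ρ)
    (hhet : ∀ i x, ‖gradient (Floc i) x‖ ^ 2 ≤ ζ ^ 2 + ρ ^ 2 * ‖gradient F x‖ ^ 2)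
    (hγmax : ∀ i, 2 * (K : ℝ) * L * ρ * γ i ≤ 1)
    (M : ℕ) :
    ∑ m ∈ Finset.range M, ∫ ω, ‖∑ k ∈ Finset.range K,
        γ (ι k) • (gradient (Floc (ι k)) (y (m * K + k) ω) -
          gradient (Floc (ι k)) (z (m * K) ω))‖ ^ 2 ∂μ
      ≤ 2 * (∑ k ∈ Finset.range K, γ (ι k) ^ 2) ^ 2 * (K : ℝ) ^ 2 * Lmax ^ 2 * M *
          (σ ^ 2 + ζ ^ 2)
        + 4 * (∑ k ∈ Finset.range K, γ (ι k) ^ 2) ^ 2 * (K : ℝ) ^ 2 * Lmax ^ 2 * ρ ^ 2 *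
            ∑ m ∈ Finset.range M, ∫ ω, ‖gradient F (z (m * K) ω)‖ ^ 2 ∂μ := by
  
  classical
  -- dimension zero: everything is trivial
  rcases Nat.eq_zero_or_pos d with hd | hd
  · subst hd
    have hnorm : ∀ x : EuclideanSpace ℝ (Fin 0), ‖x‖ = 0 := by
      intro x
      have hx : x = 0 := by ext i; exact i.elim0
      rw [hx, norm_zero]
    have hL1 : ∀ m : ℕ, (∫ ω, ‖∑ k ∈ Finset.range K,
        γ (ι k) • (gradient (Floc (ι k)) (y (m * K + k) ω) -
          gradient (Floc (ι k)) (z (m * K) ω))‖ ^ 2 ∂μ) = 0 := by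
      intro m; simp [hnorm]
    have hL2 : ∀ m : ℕ, (∫ ω, ‖gradient F (z (m * K) ω)‖ ^ 2 ∂μ) = 0 := by
      intro m; simp [hnorm]
    rw [Finset.sum_congr rfl fun m _ => hL1 m, Finset.sum_congr rfl fun m _ => hL2 m]
    simp only [Finset.sum_const_zero, mul_zero, add_zero]
    positivity
  -- main case
  have hK0 : 0 < K := by
    have hKi1 : ∀ i : Fin n, 1 ≤ Ki i := by
      intro i
      have h := hKi i
      have hτ := hτpos i
      have hle : τ i ≤ τmax := hτmax.2 ⟨i, rfl⟩
      have h1 : (1 : ℝ) ≤ (Ki i : ℝ) := by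
        rw [h, le_div_iff₀ hτ]; linarith
      exact_mod_cast h1
    have h2 : 1 ≤ K := by
      rw [hK]
      exact le_trans (hKi1 ⟨0, hn⟩)
        (Finset.single_le_sum (fun i _ => Nat.zero_le _) (Finset.mem_univ (⟨0, hn⟩ : Fin n)))
    omega
  have hL0 : 0 ≤ L := by
    set x1 : EuclideanSpace ℝ (Fin d) := EuclideanSpace.single ⟨0, hd⟩ 1 with hx1
    have h1 : ‖(0 : EuclideanSpace ℝ (Fin d)) - x1‖ = 1 := by
      rw [zero_sub, norm_neg, hx1, EuclideanSpace.norm_single, norm_one]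
    have h2 := hL 0 x1
    rw [h1, mul_one] at h2
    exact le_trans (norm_nonneg _) h2
  have hperi : ∀ a b : ℕ, ι (a + b * K) = ι a := by
    intro a b
    induction b with
    | zero => simp
    | succ b ih =>
      have h : a + (b + 1) * K = (a + b * K) + K := by ring
      rw [h, hιper, ih]
  have hzdiff : ∀ a b : ℕ, a ≤ b →
      ∀ ω, z b ω = z a ω - ∑ v ∈ Finset.Ico a b, γ (ι v) • g v ω := by
    intro a b hab
    induction b, hab using Nat.le_induction with
    | base => intro ω; simp
    | succ b hab ih =>
      intro ω
      rw [hzrec b ω, ih ω, Finset.sum_Ico_succ_top hab, sub_sub]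
  have hz2 : ∀ t, MemLp (z t) 2 μ := by
    intro t
    induction t with
    | zero =>
      have h : z 0 = fun _ => x0 := funext hz0
      rw [h]; exact memLp_const x0
    | succ t ih =>
      have h : z (t + 1) = fun ω => z t ω - γ (ι t) • g t ω := funext (hzrec t)
      rw [h]; exact ih.sub ((hg2 t).const_smul (γ (ι t)))
  have hyu : ∀ t, ∃ u, u ≤ t ∧ t < u + K ∧ y t = z u := by
    intro t
    by_cases hS : ∃ s, s < t ∧ ι s = ι t
    · set Sf := (Finset.range t).filter (fun s => ι s = ι t) with hSf
      have hne : Sf.Nonempty := by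
        obtain ⟨s, hs1, hs2⟩ := hS
        exact ⟨s, by simp [hSf, Finset.mem_filter, Finset.mem_range, hs1, hs2]⟩
      set s := Sf.max' hne with hs
      have hmem := Sf.max'_mem hne
      have hst : s < t := Finset.mem_range.1 (Finset.mem_filter.1 hmem).1
      have hι : ι s = ι t := (Finset.mem_filter.1 hmem).2
      have hmax : ∀ u, s < u → u < t → ι u ≠ ι t := by
        intro u hsu hut hcon
        have hmem2 : u ∈ Sf := by
          simp [hSf, Finset.mem_filter, Finset.mem_range, hut, hcon]
        have := Finset.le_max' _ _ hmem2
        omega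
      refine ⟨s + 1, hst, ?_, hyprev s t hst hι hmax⟩
      by_contra hc
      push_neg at hc
      have h3 : ι (t - K) = ι t := by
        have h4 := hιper (t - K)
        rw [Nat.sub_add_cancel (by omega)] at h4
        exact h4.symm
      have hmem3 : t - K ∈ Sf := by
        simp [hSf, Finset.mem_filter, Finset.mem_range, (by omega : t - K < t), h3]
      have := Finset.le_max' _ _ hmem3
      omega
    · push_neg at hS
      refine ⟨0, Nat.zero_le t, ?_, hy0 t (fun s hs => hS s hs)⟩
      by_contra hc
      push_neg at hc
      have h3 : ι (t - K) = ι t := by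
        have h4 := hιper (t - K)
        rw [Nat.sub_add_cancel (by omega)] at h4
        exact h4.symm
      exact hS (t - K) (by omega) h3
  have hy2 : ∀ t, MemLp (y t) 2 μ := by
    intro t
    obtain ⟨u, _, _, h⟩ := hyu t
    rw [h]; exact hz2 u
  -- continuity of gradients
  have hlip : ∀ (G : EuclideanSpace ℝ (Fin d) → EuclideanSpace ℝ (Fin d)) (C : ℝ),
      (∀ a b, ‖G a - G b‖ ≤ C * ‖a - b‖) → Continuous G := by
    intro G C hGl
    have h : LipschitzWith (Real.toNNReal C) G := by
      refine LipschitzWith.of_dist_le_mul fun a b => ?_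
      rw [dist_eq_norm, dist_eq_norm]
      exact (hGl a b).trans
        (mul_le_mul_of_nonneg_right (Real.le_coe_toNNReal C) (norm_nonneg _))
    exact h.continuous
  have hcontF : Continuous (gradient F) := hlip _ L hL
  have hcontFi : ∀ i, Continuous (gradient (Floc i)) := fun i => hlip _ (Li i) (hLi i)
  -- MemLp of gradient compositions
  have hcomp2 : ∀ (G : EuclideanSpace ℝ (Fin d) → EuclideanSpace ℝ (Fin d)) (C : ℝ),
      Continuous G → (∀ a b, ‖G a - G b‖ ≤ C * ‖a - b‖) →
      ∀ (w : Ω → EuclideanSpace ℝ (Fin d)), MemLp w 2 μ →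
      MemLp (fun ω => G (w ω)) 2 μ := by
    intro G C hGc hGl w hw
    have hCnn : ∀ a b, ‖G a - G b‖ ≤ max C 0 * ‖a - b‖ := fun a b =>
      (hGl a b).trans (mul_le_mul_of_nonneg_right (le_max_left _ _) (norm_nonneg _))
    refine MemLp.of_le ((memLp_const ‖G 0‖).add (hw.norm.const_mul (max C 0)))
      (hGc.comp_aestronglyMeasurable hw.1) (Filter.Eventually.of_forall fun ω => ?_)
    have h1 : ‖G (w ω)‖ ≤ ‖G 0‖ + max C 0 * ‖w ω‖ := by
      have h2 : ‖G (w ω) - G 0‖ ≤ max C 0 * ‖w ω‖ := by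
        have := hCnn (w ω) 0
        rwa [sub_zero] at this
      have h3 : ‖G (w ω)‖ ≤ ‖G 0‖ + ‖G (w ω) - G 0‖ := by
        have := norm_add_le (G 0) (G (w ω) - G 0)
        rwa [add_sub_cancel] at this
      linarith
    have h4 : (0 : ℝ) ≤ ‖G 0‖ + max C 0 * ‖w ω‖ := by positivity
    simpa [Real.norm_eq_abs, abs_of_nonneg h4] using h1
  have hgFy2 : ∀ v, MemLp (fun ω => gradient F (y v ω)) 2 μ := fun v =>
    hcomp2 _ L hcontF hL _ (hy2 v)
  have hgFz2 : ∀ t, MemLp (fun ω => gradient F (z t ω)) 2 μ := fun t =>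
    hcomp2 _ L hcontF hL _ (hz2 t)
  have hgFiy2 : ∀ (i : Fin n) v, MemLp (fun ω => gradient (Floc i) (y v ω)) 2 μ := fun i v =>
    hcomp2 _ (Li i) (hcontFi i) (hLi i) _ (hy2 v)
  have hgFiz2 : ∀ (i : Fin n) t, MemLp (fun ω => gradient (Floc i) (z t ω)) 2 μ := fun i t =>
    hcomp2 _ (Li i) (hcontFi i) (hLi i) _ (hz2 t)
  -- basic integrability facts
  have hsqint : ∀ {w : Ω → EuclideanSpace ℝ (Fin d)}, MemLp w 2 μ →
      Integrable (fun ω => ‖w ω‖ ^ 2) μ := fun hw => hw.norm.integrable_sq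
  have hDint : ∀ t, Integrable (fun ω => ‖y t ω - z (t / K * K) ω‖ ^ 2) μ := fun t =>
    hsqint ((hy2 t).sub (hz2 _))
  have hDnn : ∀ t, 0 ≤ ∫ ω, ‖y t ω - z (t / K * K) ω‖ ^ 2 ∂μ := fun t =>
    integral_nonneg fun ω => sq_nonneg _
  have hGnn : ∀ m : ℕ, 0 ≤ ∫ ω, ‖gradient F (z (m * K) ω)‖ ^ 2 ∂μ := fun m =>
    integral_nonneg fun ω => sq_nonneg _
  have hEgnn : ∀ v, 0 ≤ ∫ ω, ‖g v ω‖ ^ 2 ∂μ := fun v => integral_nonneg fun ω => sq_nonneg _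
  -- second moment bound for delivered gradients
  have hEg : ∀ v, ∫ ω, ‖g v ω‖ ^ 2 ∂μ
      ≤ σ ^ 2 + ζ ^ 2 + 2 * ρ ^ 2 * (∫ ω, ‖gradient F (z (v / K * K) ω)‖ ^ 2 ∂μ)
        + 2 * ρ ^ 2 * L ^ 2 * ∫ ω, ‖y v ω - z (v / K * K) ω‖ ^ 2 ∂μ := by
    intro v
    have hpy := integral_sq_norm_eq (hℱle v) (hg2 v) (hgFiy2 (ι v) v)
      ((hcontFi (ι v)).comp_stronglyMeasurable (hymeas v)) (hUG v)
    have h7 : ∫ ω, ‖g v ω - gradient (Floc (ι v)) (y v ω)‖ ^ 2 ∂μ ≤ σ ^ 2 := by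
      have hint : Integrable (fun ω => ‖g v ω - gradient (Floc (ι v)) (y v ω)‖ ^ 2) μ :=
        hsqint ((hg2 v).sub (hgFiy2 (ι v) v))
      calc ∫ ω, ‖g v ω - gradient (Floc (ι v)) (y v ω)‖ ^ 2 ∂μ
          = ∫ ω, (μ[fun ω' => ‖g v ω' - gradient (Floc (ι v)) (y v ω')‖ ^ 2|ℱ v]) ω ∂μ :=
            (integral_condExp (hℱle v)).symm
        _ ≤ ∫ _ω, σ ^ 2 ∂μ :=
            integral_mono_ae integrable_condExp (integrable_const _) (hBV v)
        _ = σ ^ 2 := by simp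
    have h9 : ∫ ω, ‖gradient F (y v ω)‖ ^ 2 ∂μ
        ≤ 2 * (∫ ω, ‖gradient F (z (v / K * K) ω)‖ ^ 2 ∂μ)
          + 2 * L ^ 2 * ∫ ω, ‖y v ω - z (v / K * K) ω‖ ^ 2 ∂μ := by
      have hpw : ∀ ω, ‖gradient F (y v ω)‖ ^ 2
          ≤ 2 * ‖gradient F (z (v / K * K) ω)‖ ^ 2
            + 2 * L ^ 2 * ‖y v ω - z (v / K * K) ω‖ ^ 2 := by
        intro ω
        have h1 : ‖gradient F (y v ω)‖
            ≤ ‖gradient F (z (v / K * K) ω)‖ + L * ‖y v ω - z (v / K * K) ω‖ := by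
          have h2 := hL (y v ω) (z (v / K * K) ω)
          have h3 : ‖gradient F (y v ω)‖ ≤ ‖gradient F (z (v / K * K) ω)‖
              + ‖gradient F (y v ω) - gradient F (z (v / K * K) ω)‖ := by
            have := norm_add_le (gradient F (z (v / K * K) ω))
              (gradient F (y v ω) - gradient F (z (v / K * K) ω))
            rwa [add_sub_cancel] at this
          linarith
        have h4 : (0 : ℝ) ≤ ‖gradient F (y v ω)‖ := norm_nonneg _
        nlinarith [sq_nonneg (‖gradient F (z (v / K * K) ω)‖ - L * ‖y v ω - z (v / K * K) ω‖),
          norm_nonneg (gradient F (z (v / K * K) ω)),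
          norm_nonneg (y v ω - z (v / K * K) ω), hL0]
      have hintR : Integrable (fun ω => 2 * ‖gradient F (z (v / K * K) ω)‖ ^ 2
          + 2 * L ^ 2 * ‖y v ω - z (v / K * K) ω‖ ^ 2) μ :=
        ((hsqint (hgFz2 _)).const_mul 2).add ((hDint v).const_mul _)
      calc ∫ ω, ‖gradient F (y v ω)‖ ^ 2 ∂μ
          ≤ ∫ ω, (2 * ‖gradient F (z (v / K * K) ω)‖ ^ 2
              + 2 * L ^ 2 * ‖y v ω - z (v / K * K) ω‖ ^ 2) ∂μ :=
            integral_mono (hsqint (hgFy2 v)) hintR hpw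
        _ = 2 * (∫ ω, ‖gradient F (z (v / K * K) ω)‖ ^ 2 ∂μ)
            + 2 * L ^ 2 * ∫ ω, ‖y v ω - z (v / K * K) ω‖ ^ 2 ∂μ := by
            rw [integral_add ((hsqint (hgFz2 _)).const_mul 2) ((hDint v).const_mul _),
              integral_const_mul, integral_const_mul]
    have h8 : ∫ ω, ‖gradient (Floc (ι v)) (y v ω)‖ ^ 2 ∂μ
        ≤ ζ ^ 2 + ρ ^ 2 * ∫ ω, ‖gradient F (y v ω)‖ ^ 2 ∂μ := by
      have hintR : Integrable (fun ω => ζ ^ 2 + ρ ^ 2 * ‖gradient F (y v ω)‖ ^ 2) μ :=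
        (integrable_const _).add ((hsqint (hgFy2 v)).const_mul _)
      calc ∫ ω, ‖gradient (Floc (ι v)) (y v ω)‖ ^ 2 ∂μ
          ≤ ∫ ω, (ζ ^ 2 + ρ ^ 2 * ‖gradient F (y v ω)‖ ^ 2) ∂μ :=
            integral_mono (hsqint (hgFiy2 (ι v) v)) hintR (fun ω => hhet (ι v) (y v ω))
        _ = ζ ^ 2 + ρ ^ 2 * ∫ ω, ‖gradient F (y v ω)‖ ^ 2 ∂μ := by
            rw [integral_add (integrable_const _) ((hsqint (hgFy2 v)).const_mul _),
              integral_const_mul]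
            simp
    have hρ9 := mul_le_mul_of_nonneg_left h9 (sq_nonneg ρ)
    nlinarith [hpy, h7, h8, hρ9]
  -- per-iteration window bound
  have hDt : ∀ t, ∃ J : Finset ℕ, (∀ v ∈ J, v < t ∧ t ≤ v + K) ∧
      (∫ ω, ‖y t ω - z (t / K * K) ω‖ ^ 2 ∂μ)
        ≤ (K : ℝ) * ∑ v ∈ J, γ (ι v) ^ 2 * ∫ ω, ‖g v ω‖ ^ 2 ∂μ := by
    intro t
    obtain ⟨u, hu1, hu2, hyz⟩ := hyu t
    have hcle : t / K * K ≤ t := Nat.div_mul_le_self t K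
    have hclt : t < t / K * K + K := by
      have h1 := Nat.div_add_mod t K
      have h2 := Nat.mod_lt t hK0
      rw [mul_comm] at h1
      omega
    set c := t / K * K with hc
    obtain ⟨a, b, ha1, ha2, hb1, hb2, hab⟩ :
        ∃ a b : ℕ, t < a + K ∧ a ≤ b ∧ b ≤ t ∧ b - a ≤ K ∧
          ∀ ω, ‖y t ω - z c ω‖ = ‖∑ v ∈ Finset.Ico a b, γ (ι v) • g v ω‖ := by
      rcases le_total u c with h | h
      · refine ⟨u, c, hu2, h, hcle, by omega, fun ω => ?_⟩
        rw [hyz, hzdiff u c h ω, sub_sub_cancel]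
      · refine ⟨c, u, hclt, h, hu1, by omega, fun ω => ?_⟩
        rw [hyz, hzdiff c u h ω, sub_sub_cancel_left, norm_neg]
    refine ⟨Finset.Ico a b, ?_, ?_⟩
    · intro v hv
      rw [Finset.mem_Ico] at hv
      omega
    · have hpw : ∀ ω, ‖y t ω - z c ω‖ ^ 2
          ≤ (K : ℝ) * ∑ v ∈ Finset.Ico a b, γ (ι v) ^ 2 * ‖g v ω‖ ^ 2 := by
        intro ω
        rw [hab ω]
        have hsnn : ∀ v ∈ Finset.Ico a b, (0:ℝ) ≤ γ (ι v) ^ 2 * ‖g v ω‖ ^ 2 :=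
          fun v _ => mul_nonneg (sq_nonneg _) (sq_nonneg _)
        calc ‖∑ v ∈ Finset.Ico a b, γ (ι v) • g v ω‖ ^ 2
            ≤ (∑ v ∈ Finset.Ico a b, ‖γ (ι v) • g v ω‖) ^ 2 :=
              pow_le_pow_left₀ (norm_nonneg _) (norm_sum_le _ _) 2
          _ ≤ ((Finset.Ico a b).card : ℝ)
              * ∑ v ∈ Finset.Ico a b, ‖γ (ι v) • g v ω‖ ^ 2 :=
              sq_sum_le_card_mul_sum_sq
          _ = ((Finset.Ico a b).card : ℝ)
              * ∑ v ∈ Finset.Ico a b, γ (ι v) ^ 2 * ‖g v ω‖ ^ 2 := by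
              congr 1
              refine Finset.sum_congr rfl fun v _ => ?_
              rw [norm_smul, mul_pow, Real.norm_eq_abs, sq_abs]
          _ ≤ (K : ℝ) * ∑ v ∈ Finset.Ico a b, γ (ι v) ^ 2 * ‖g v ω‖ ^ 2 := by
              refine mul_le_mul_of_nonneg_right ?_ (Finset.sum_nonneg hsnn)
              rw [Nat.card_Ico]
              exact_mod_cast hb2
      have hintR : Integrable
          (fun ω => (K : ℝ) * ∑ v ∈ Finset.Ico a b, γ (ι v) ^ 2 * ‖g v ω‖ ^ 2) μ :=
        (integrable_finset_sum _ fun v _ => ((hsqint (hg2 v)).const_mul _)).const_mul _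
      calc ∫ ω, ‖y t ω - z c ω‖ ^ 2 ∂μ
          ≤ ∫ ω, (K : ℝ) * ∑ v ∈ Finset.Ico a b, γ (ι v) ^ 2 * ‖g v ω‖ ^ 2 ∂μ :=
            integral_mono (hDint t) hintR hpw
        _ = (K : ℝ) * ∑ v ∈ Finset.Ico a b, γ (ι v) ^ 2 * ∫ ω, ‖g v ω‖ ^ 2 ∂μ := by
            rw [integral_const_mul,
              integral_finset_sum _ (fun v _ => ((hsqint (hg2 v)).const_mul _))]
            congr 1
            exact Finset.sum_congr rfl fun v _ => integral_const_mul _ _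
  -- block decomposition of sums over range (M*K)
  have hblock : ∀ (f : ℕ → ℝ) (Mm : ℕ),
      ∑ v ∈ Finset.range (Mm * K), f v
        = ∑ m ∈ Finset.range Mm, ∑ k ∈ Finset.range K, f (m * K + k) := by
    intro f Mm
    induction Mm with
    | zero => simp
    | succ Mm ih =>
      have h1 : (Mm + 1) * K = Mm * K + K := by ring
      rw [h1, Finset.sum_range_add, ih, Finset.sum_range_succ]
  have hAv : ∀ m k : ℕ, γ (ι (m * K + k)) = γ (ι k) := by
    intro m k
    rw [show m * K + k = k + m * K by ring, hperi]
  have hdivmk : ∀ m k : ℕ, k < K → (m * K + k) / K = m := by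
    intro m k hk
    rw [show m * K + k = K * m + k by ring, Nat.mul_add_div hK0, Nat.div_eq_of_lt hk, add_zero]
  -- the three structured sums
  have hsum1 : ∑ v ∈ Finset.range (M * K), γ (ι v) ^ 2
      = (M : ℝ) * ∑ k ∈ Finset.range K, γ (ι k) ^ 2 := by
    rw [hblock]
    rw [Finset.sum_congr rfl fun m _ => Finset.sum_congr rfl fun k _ => by rw [hAv m k]]
    rw [Finset.sum_const, Finset.card_range, nsmul_eq_mul]
  have hsum2 : ∑ v ∈ Finset.range (M * K),
        γ (ι v) ^ 2 * ∫ ω, ‖gradient F (z (v / K * K) ω)‖ ^ 2 ∂μ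
      = (∑ k ∈ Finset.range K, γ (ι k) ^ 2)
        * ∑ m ∈ Finset.range M, ∫ ω, ‖gradient F (z (m * K) ω)‖ ^ 2 ∂μ := by
    rw [hblock]
    have h1 : ∀ m ∈ Finset.range M, ∀ k ∈ Finset.range K,
        γ (ι (m * K + k)) ^ 2 * ∫ ω, ‖gradient F (z ((m * K + k) / K * K) ω)‖ ^ 2 ∂μ
          = γ (ι k) ^ 2 * ∫ ω, ‖gradient F (z (m * K) ω)‖ ^ 2 ∂μ := by
      intro m _ k hk
      rw [hAv m k, hdivmk m k (Finset.mem_range.1 hk)]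
    rw [Finset.sum_congr rfl fun m hm => Finset.sum_congr rfl fun k hk => h1 m hm k hk]
    rw [Finset.sum_congr rfl fun (m : ℕ) (_ : m ∈ Finset.range M) =>
      (Finset.sum_mul (Finset.range K) (fun k => γ (ι k) ^ 2)
        (∫ ω, ‖gradient F (z (m * K) ω)‖ ^ 2 ∂μ)).symm]
    rw [← Finset.mul_sum]
  -- abbreviate the total displacement sum
  set S : ℝ := ∑ t ∈ Finset.range (M * K), ∫ ω, ‖y t ω - z (t / K * K) ω‖ ^ 2 ∂μ with hS
  have hfnn : ∀ v : ℕ, 0 ≤ γ (ι v) ^ 2 * ∫ ω, ‖g v ω‖ ^ 2 ∂μ := fun v =>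
    mul_nonneg (sq_nonneg _) (hEgnn v)
  -- double counting / swap
  have hswap : S ≤ (K : ℝ) ^ 2 * ∑ v ∈ Finset.range (M * K),
      γ (ι v) ^ 2 * ∫ ω, ‖g v ω‖ ^ 2 ∂μ := by
    have h1 : ∀ t ∈ Finset.range (M * K),
        (∫ ω, ‖y t ω - z (t / K * K) ω‖ ^ 2 ∂μ)
          ≤ (K : ℝ) * ∑ v ∈ (Finset.range (M * K)).filter (fun v => v < t ∧ t ≤ v + K),
              γ (ι v) ^ 2 * ∫ ω, ‖g v ω‖ ^ 2 ∂μ := by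
      intro t ht
      obtain ⟨J, hJ, hDle⟩ := hDt t
      refine hDle.trans (mul_le_mul_of_nonneg_left ?_ (Nat.cast_nonneg K))
      refine Finset.sum_le_sum_of_subset_of_nonneg ?_ (fun v _ _ => hfnn v)
      intro v hv
      have h2 := hJ v hv
      rw [Finset.mem_filter, Finset.mem_range]
      exact ⟨lt_trans h2.1 (Finset.mem_range.1 ht), h2⟩
    have h3 : ∑ t ∈ Finset.range (M * K),
        ∑ v ∈ (Finset.range (M * K)).filter (fun v => v < t ∧ t ≤ v + K),
          γ (ι v) ^ 2 * ∫ ω, ‖g v ω‖ ^ 2 ∂μ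
        ≤ (K : ℝ) * ∑ v ∈ Finset.range (M * K),
            γ (ι v) ^ 2 * ∫ ω, ‖g v ω‖ ^ 2 ∂μ := by
      have h4 : ∀ v ∈ Finset.range (M * K),
          ∑ t ∈ Finset.range (M * K),
            (if v < t ∧ t ≤ v + K then γ (ι v) ^ 2 * ∫ ω, ‖g v ω‖ ^ 2 ∂μ else 0)
          ≤ (K : ℝ) * (γ (ι v) ^ 2 * ∫ ω, ‖g v ω‖ ^ 2 ∂μ) := by
        intro v _
        rw [← Finset.sum_filter]
        rw [Finset.sum_const, nsmul_eq_mul]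
        refine mul_le_mul_of_nonneg_right ?_ (hfnn v)
        have hsub : (Finset.range (M * K)).filter (fun t => v < t ∧ t ≤ v + K)
            ⊆ Finset.Ico (v + 1) (v + K + 1) := by
          intro t ht
          rw [Finset.mem_filter] at ht
          rw [Finset.mem_Ico]
          omega
        have hcard := Finset.card_le_card hsub
        rw [Nat.card_Ico] at hcard
        exact_mod_cast le_trans hcard (by omega)
      calc ∑ t ∈ Finset.range (M * K),
          ∑ v ∈ (Finset.range (M * K)).filter (fun v => v < t ∧ t ≤ v + K),
            γ (ι v) ^ 2 * ∫ ω, ‖g v ω‖ ^ 2 ∂μ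
          = ∑ t ∈ Finset.range (M * K), ∑ v ∈ Finset.range (M * K),
              (if v < t ∧ t ≤ v + K then γ (ι v) ^ 2 * ∫ ω, ‖g v ω‖ ^ 2 ∂μ else 0) := by
            exact Finset.sum_congr rfl fun t _ => Finset.sum_filter _ _
        _ = ∑ v ∈ Finset.range (M * K), ∑ t ∈ Finset.range (M * K),
              (if v < t ∧ t ≤ v + K then γ (ι v) ^ 2 * ∫ ω, ‖g v ω‖ ^ 2 ∂μ else 0) :=
            Finset.sum_comm
        _ ≤ ∑ v ∈ Finset.range (M * K),
              (K : ℝ) * (γ (ι v) ^ 2 * ∫ ω, ‖g v ω‖ ^ 2 ∂μ) := Finset.sum_le_sum h4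
        _ = (K : ℝ) * ∑ v ∈ Finset.range (M * K),
              γ (ι v) ^ 2 * ∫ ω, ‖g v ω‖ ^ 2 ∂μ := (Finset.mul_sum _ _ _).symm
    calc S ≤ ∑ t ∈ Finset.range (M * K),
        (K : ℝ) * ∑ v ∈ (Finset.range (M * K)).filter (fun v => v < t ∧ t ≤ v + K),
            γ (ι v) ^ 2 * ∫ ω, ‖g v ω‖ ^ 2 ∂μ := Finset.sum_le_sum h1
      _ = (K : ℝ) * ∑ t ∈ Finset.range (M * K),
          ∑ v ∈ (Finset.range (M * K)).filter (fun v => v < t ∧ t ≤ v + K),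
            γ (ι v) ^ 2 * ∫ ω, ‖g v ω‖ ^ 2 ∂μ := (Finset.mul_sum _ _ _).symm
      _ ≤ (K : ℝ) * ((K : ℝ) * ∑ v ∈ Finset.range (M * K),
            γ (ι v) ^ 2 * ∫ ω, ‖g v ω‖ ^ 2 ∂μ) :=
          mul_le_mul_of_nonneg_left h3 (Nat.cast_nonneg K)
      _ = (K : ℝ) ^ 2 * ∑ v ∈ Finset.range (M * K),
            γ (ι v) ^ 2 * ∫ ω, ‖g v ω‖ ^ 2 ∂μ := by ring
  -- stepsize condition
  have hsb : ∀ i, 2 * (K : ℝ) ^ 2 * ρ ^ 2 * L ^ 2 * γ i ^ 2 ≤ 1 / 2 := by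
    intro i
    have h := hγmax i
    have hγnn := (hγpos i).le
    have hKc : (0 : ℝ) ≤ (K : ℝ) := Nat.cast_nonneg K
    have h0 : 0 ≤ 2 * (K : ℝ) * L * ρ * γ i := by
      have h1 : (0 : ℝ) ≤ 2 * (K : ℝ) := by positivity
      exact mul_nonneg (mul_nonneg (mul_nonneg h1 hL0) hρ) hγnn
    nlinarith [h, h0]
  -- master bound on the weighted second moments
  have hEg2 : ∀ v ∈ Finset.range (M * K),
      γ (ι v) ^ 2 * ∫ ω, ‖g v ω‖ ^ 2 ∂μ
        ≤ γ (ι v) ^ 2 * (σ ^ 2 + ζ ^ 2)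
          + 2 * ρ ^ 2 * (γ (ι v) ^ 2 * ∫ ω, ‖gradient F (z (v / K * K) ω)‖ ^ 2 ∂μ)
          + (2 * ρ ^ 2 * L ^ 2 * γ (ι v) ^ 2)
              * ∫ ω, ‖y v ω - z (v / K * K) ω‖ ^ 2 ∂μ := by
    intro v _
    have h := mul_le_mul_of_nonneg_left (hEg v) (sq_nonneg (γ (ι v)))
    calc γ (ι v) ^ 2 * ∫ ω, ‖g v ω‖ ^ 2 ∂μ
        ≤ γ (ι v) ^ 2 * (σ ^ 2 + ζ ^ 2
            + 2 * ρ ^ 2 * (∫ ω, ‖gradient F (z (v / K * K) ω)‖ ^ 2 ∂μ)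
            + 2 * ρ ^ 2 * L ^ 2 * ∫ ω, ‖y v ω - z (v / K * K) ω‖ ^ 2 ∂μ) := h
      _ = _ := by ring
  have hSfin : ∑ v ∈ Finset.range (M * K), γ (ι v) ^ 2 * ∫ ω, ‖g v ω‖ ^ 2 ∂μ
      ≤ (M : ℝ) * (∑ k ∈ Finset.range K, γ (ι k) ^ 2) * (σ ^ 2 + ζ ^ 2)
        + 2 * ρ ^ 2 * ((∑ k ∈ Finset.range K, γ (ι k) ^ 2)
            * ∑ m ∈ Finset.range M, ∫ ω, ‖gradient F (z (m * K) ω)‖ ^ 2 ∂μ)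
        + ∑ v ∈ Finset.range (M * K), (2 * ρ ^ 2 * L ^ 2 * γ (ι v) ^ 2)
            * ∫ ω, ‖y v ω - z (v / K * K) ω‖ ^ 2 ∂μ := by
    calc ∑ v ∈ Finset.range (M * K), γ (ι v) ^ 2 * ∫ ω, ‖g v ω‖ ^ 2 ∂μ
        ≤ ∑ v ∈ Finset.range (M * K), (γ (ι v) ^ 2 * (σ ^ 2 + ζ ^ 2)
            + 2 * ρ ^ 2 * (γ (ι v) ^ 2 * ∫ ω, ‖gradient F (z (v / K * K) ω)‖ ^ 2 ∂μ)
            + (2 * ρ ^ 2 * L ^ 2 * γ (ι v) ^ 2)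
                * ∫ ω, ‖y v ω - z (v / K * K) ω‖ ^ 2 ∂μ) := Finset.sum_le_sum hEg2
      _ = (∑ v ∈ Finset.range (M * K), γ (ι v) ^ 2 * (σ ^ 2 + ζ ^ 2))
          + (∑ v ∈ Finset.range (M * K),
              2 * ρ ^ 2 * (γ (ι v) ^ 2 * ∫ ω, ‖gradient F (z (v / K * K) ω)‖ ^ 2 ∂μ))
          + ∑ v ∈ Finset.range (M * K), (2 * ρ ^ 2 * L ^ 2 * γ (ι v) ^ 2)
              * ∫ ω, ‖y v ω - z (v / K * K) ω‖ ^ 2 ∂μ := by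
          rw [Finset.sum_add_distrib, Finset.sum_add_distrib]
      _ = (M : ℝ) * (∑ k ∈ Finset.range K, γ (ι k) ^ 2) * (σ ^ 2 + ζ ^ 2)
          + 2 * ρ ^ 2 * ((∑ k ∈ Finset.range K, γ (ι k) ^ 2)
              * ∑ m ∈ Finset.range M, ∫ ω, ‖gradient F (z (m * K) ω)‖ ^ 2 ∂μ)
          + ∑ v ∈ Finset.range (M * K), (2 * ρ ^ 2 * L ^ 2 * γ (ι v) ^ 2)
              * ∫ ω, ‖y v ω - z (v / K * K) ω‖ ^ 2 ∂μ := by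
          rw [← Finset.sum_mul, hsum1, ← Finset.mul_sum, hsum2]
  -- absorption of the displacement terms
  have hT3 : (K : ℝ) ^ 2 * ∑ v ∈ Finset.range (M * K),
      (2 * ρ ^ 2 * L ^ 2 * γ (ι v) ^ 2) * ∫ ω, ‖y v ω - z (v / K * K) ω‖ ^ 2 ∂μ
      ≤ (1 / 2) * S := by
    rw [hS, Finset.mul_sum, Finset.mul_sum]
    refine Finset.sum_le_sum fun v _ => ?_
    have h := mul_le_mul_of_nonneg_right (hsb (ι v)) (hDnn v)
    calc (K : ℝ) ^ 2 * ((2 * ρ ^ 2 * L ^ 2 * γ (ι v) ^ 2)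
          * ∫ ω, ‖y v ω - z (v / K * K) ω‖ ^ 2 ∂μ)
        = (2 * (K : ℝ) ^ 2 * ρ ^ 2 * L ^ 2 * γ (ι v) ^ 2)
          * ∫ ω, ‖y v ω - z (v / K * K) ω‖ ^ 2 ∂μ := by ring
      _ ≤ (1 / 2) * ∫ ω, ‖y v ω - z (v / K * K) ω‖ ^ 2 ∂μ := h
  have hS2 : S ≤ 2 * (K : ℝ) ^ 2 * (M : ℝ) * (∑ k ∈ Finset.range K, γ (ι k) ^ 2)
        * (σ ^ 2 + ζ ^ 2)
      + 4 * (K : ℝ) ^ 2 * ρ ^ 2 * (∑ k ∈ Finset.range K, γ (ι k) ^ 2)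
        * ∑ m ∈ Finset.range M, ∫ ω, ‖gradient F (z (m * K) ω)‖ ^ 2 ∂μ := by
    have h2 : (K : ℝ) ^ 2 * ∑ v ∈ Finset.range (M * K),
        γ (ι v) ^ 2 * ∫ ω, ‖g v ω‖ ^ 2 ∂μ
        ≤ (K : ℝ) ^ 2 * ((M : ℝ) * (∑ k ∈ Finset.range K, γ (ι k) ^ 2) * (σ ^ 2 + ζ ^ 2))
          + (K : ℝ) ^ 2 * (2 * ρ ^ 2 * ((∑ k ∈ Finset.range K, γ (ι k) ^ 2)
              * ∑ m ∈ Finset.range M, ∫ ω, ‖gradient F (z (m * K) ω)‖ ^ 2 ∂μ))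
          + (K : ℝ) ^ 2 * ∑ v ∈ Finset.range (M * K),
              (2 * ρ ^ 2 * L ^ 2 * γ (ι v) ^ 2)
                * ∫ ω, ‖y v ω - z (v / K * K) ω‖ ^ 2 ∂μ := by
      calc (K : ℝ) ^ 2 * ∑ v ∈ Finset.range (M * K),
          γ (ι v) ^ 2 * ∫ ω, ‖g v ω‖ ^ 2 ∂μ
          ≤ (K : ℝ) ^ 2 * ((M : ℝ) * (∑ k ∈ Finset.range K, γ (ι k) ^ 2) * (σ ^ 2 + ζ ^ 2)
            + 2 * ρ ^ 2 * ((∑ k ∈ Finset.range K, γ (ι k) ^ 2)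
                * ∑ m ∈ Finset.range M, ∫ ω, ‖gradient F (z (m * K) ω)‖ ^ 2 ∂μ)
            + ∑ v ∈ Finset.range (M * K), (2 * ρ ^ 2 * L ^ 2 * γ (ι v) ^ 2)
                * ∫ ω, ‖y v ω - z (v / K * K) ω‖ ^ 2 ∂μ) :=
            mul_le_mul_of_nonneg_left hSfin (sq_nonneg _)
        _ = _ := by ring
    linarith [hswap, h2, hT3]
  -- per-cycle bias bound
  have hAnn : (0 : ℝ) ≤ ∑ k ∈ Finset.range K, γ (ι k) ^ 2 :=
    Finset.sum_nonneg fun k _ => sq_nonneg _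
  have hLmax2 : ∀ i, Li i ≤ Lmax := fun i => hLmax.2 ⟨i, rfl⟩
  have hBm : ∀ m ∈ Finset.range M,
      (∫ ω, ‖∑ k ∈ Finset.range K,
          γ (ι k) • (gradient (Floc (ι k)) (y (m * K + k) ω) -
            gradient (Floc (ι k)) (z (m * K) ω))‖ ^ 2 ∂μ)
        ≤ (∑ k ∈ Finset.range K, γ (ι k) ^ 2) * Lmax ^ 2
            * ∑ k ∈ Finset.range K,
                ∫ ω, ‖y (m * K + k) ω - z ((m * K + k) / K * K) ω‖ ^ 2 ∂μ := by
    intro m _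
    have hzrw : ∀ k ∈ Finset.range K, (m * K + k) / K * K = m * K := fun k hk => by
      rw [hdivmk m k (Finset.mem_range.1 hk)]
    have hpw : ∀ ω, ‖∑ k ∈ Finset.range K,
        γ (ι k) • (gradient (Floc (ι k)) (y (m * K + k) ω) -
          gradient (Floc (ι k)) (z (m * K) ω))‖ ^ 2
        ≤ (∑ k ∈ Finset.range K, γ (ι k) ^ 2)
          * ∑ k ∈ Finset.range K, Lmax ^ 2 * ‖y (m * K + k) ω - z (m * K) ω‖ ^ 2 := by
      intro ω
      have h1 : ‖∑ k ∈ Finset.range K,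
          γ (ι k) • (gradient (Floc (ι k)) (y (m * K + k) ω) -
            gradient (Floc (ι k)) (z (m * K) ω))‖
          ≤ ∑ k ∈ Finset.range K,
              γ (ι k) * ‖gradient (Floc (ι k)) (y (m * K + k) ω) -
                gradient (Floc (ι k)) (z (m * K) ω)‖ := by
        refine (norm_sum_le _ _).trans_eq (Finset.sum_congr rfl fun k _ => ?_)
        rw [norm_smul, Real.norm_eq_abs, abs_of_pos (hγpos _)]
      have h2 := Finset.sum_mul_sq_le_sq_mul_sq (Finset.range K) (fun k => γ (ι k))
        (fun k => ‖gradient (Floc (ι k)) (y (m * K + k) ω) -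
          gradient (Floc (ι k)) (z (m * K) ω)‖)
      have h3 : ∀ k ∈ Finset.range K,
          ‖gradient (Floc (ι k)) (y (m * K + k) ω) -
            gradient (Floc (ι k)) (z (m * K) ω)‖ ^ 2
          ≤ Lmax ^ 2 * ‖y (m * K + k) ω - z (m * K) ω‖ ^ 2 := by
        intro k _
        have h4 : ‖gradient (Floc (ι k)) (y (m * K + k) ω) -
            gradient (Floc (ι k)) (z (m * K) ω)‖
            ≤ Lmax * ‖y (m * K + k) ω - z (m * K) ω‖ :=
          (hLi (ι k) _ _).trans
            (mul_le_mul_of_nonneg_right (hLmax2 (ι k)) (norm_nonneg _))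
        calc ‖gradient (Floc (ι k)) (y (m * K + k) ω) -
            gradient (Floc (ι k)) (z (m * K) ω)‖ ^ 2
            ≤ (Lmax * ‖y (m * K + k) ω - z (m * K) ω‖) ^ 2 :=
              pow_le_pow_left₀ (norm_nonneg _) h4 2
          _ = Lmax ^ 2 * ‖y (m * K + k) ω - z (m * K) ω‖ ^ 2 := by ring
      calc ‖∑ k ∈ Finset.range K,
          γ (ι k) • (gradient (Floc (ι k)) (y (m * K + k) ω) -
            gradient (Floc (ι k)) (z (m * K) ω))‖ ^ 2
          ≤ (∑ k ∈ Finset.range K,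
              γ (ι k) * ‖gradient (Floc (ι k)) (y (m * K + k) ω) -
                gradient (Floc (ι k)) (z (m * K) ω)‖) ^ 2 :=
            pow_le_pow_left₀ (norm_nonneg _) h1 2
        _ ≤ (∑ k ∈ Finset.range K, γ (ι k) ^ 2)
            * ∑ k ∈ Finset.range K,
                ‖gradient (Floc (ι k)) (y (m * K + k) ω) -
                  gradient (Floc (ι k)) (z (m * K) ω)‖ ^ 2 := h2
        _ ≤ (∑ k ∈ Finset.range K, γ (ι k) ^ 2)
            * ∑ k ∈ Finset.range K, Lmax ^ 2 * ‖y (m * K + k) ω - z (m * K) ω‖ ^ 2 :=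
            mul_le_mul_of_nonneg_left (Finset.sum_le_sum h3) hAnn
    have hmemL : MemLp (fun ω => ∑ k ∈ Finset.range K,
        γ (ι k) • (gradient (Floc (ι k)) (y (m * K + k) ω) -
          gradient (Floc (ι k)) (z (m * K) ω))) 2 μ :=
      memLp_finset_sum _ fun k _ =>
        (((hgFiy2 (ι k) (m * K + k)).sub (hgFiz2 (ι k) (m * K))).const_smul (γ (ι k)))
    have hDint2 : ∀ t c : ℕ, Integrable (fun ω => ‖y t ω - z c ω‖ ^ 2) μ := fun t c =>
      hsqint ((hy2 t).sub (hz2 c))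
    have hintR : Integrable (fun ω => (∑ k ∈ Finset.range K, γ (ι k) ^ 2)
        * ∑ k ∈ Finset.range K, Lmax ^ 2 * ‖y (m * K + k) ω - z (m * K) ω‖ ^ 2) μ :=
      (integrable_finset_sum _ fun k _ =>
        ((hDint2 (m * K + k) (m * K)).const_mul _)).const_mul _
    calc ∫ ω, ‖∑ k ∈ Finset.range K,
        γ (ι k) • (gradient (Floc (ι k)) (y (m * K + k) ω) -
          gradient (Floc (ι k)) (z (m * K) ω))‖ ^ 2 ∂μ
        ≤ ∫ ω, (∑ k ∈ Finset.range K, γ (ι k) ^ 2)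
            * ∑ k ∈ Finset.range K, Lmax ^ 2 * ‖y (m * K + k) ω - z (m * K) ω‖ ^ 2 ∂μ :=
          integral_mono (hsqint hmemL) hintR hpw
      _ = (∑ k ∈ Finset.range K, γ (ι k) ^ 2)
          * ∑ k ∈ Finset.range K, Lmax ^ 2 * ∫ ω, ‖y (m * K + k) ω - z (m * K) ω‖ ^ 2 ∂μ := by
          rw [integral_const_mul, integral_finset_sum _ (fun k (_ : k ∈ Finset.range K) =>
            ((hDint2 (m * K + k) (m * K)).const_mul (Lmax ^ 2)))]
          congr 1
          exact Finset.sum_congr rfl fun k _ => integral_const_mul _ _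
      _ = (∑ k ∈ Finset.range K, γ (ι k) ^ 2) * Lmax ^ 2
          * ∑ k ∈ Finset.range K,
              ∫ ω, ‖y (m * K + k) ω - z ((m * K + k) / K * K) ω‖ ^ 2 ∂μ := by
          have hsum3 : (∑ k ∈ Finset.range K,
              ∫ ω, ‖y (m * K + k) ω - z ((m * K + k) / K * K) ω‖ ^ 2 ∂μ)
              = ∑ k ∈ Finset.range K, ∫ ω, ‖y (m * K + k) ω - z (m * K) ω‖ ^ 2 ∂μ :=
            Finset.sum_congr rfl fun k hk => by rw [hzrw k hk]
          rw [hsum3, ← Finset.mul_sum]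
          ring
  -- conclusion
  calc ∑ m ∈ Finset.range M, ∫ ω, ‖∑ k ∈ Finset.range K,
        γ (ι k) • (gradient (Floc (ι k)) (y (m * K + k) ω) -
          gradient (Floc (ι k)) (z (m * K) ω))‖ ^ 2 ∂μ
      ≤ ∑ m ∈ Finset.range M, (∑ k ∈ Finset.range K, γ (ι k) ^ 2) * Lmax ^ 2
          * ∑ k ∈ Finset.range K,
              ∫ ω, ‖y (m * K + k) ω - z ((m * K + k) / K * K) ω‖ ^ 2 ∂μ :=
        Finset.sum_le_sum hBm
    _ = (∑ k ∈ Finset.range K, γ (ι k) ^ 2) * Lmax ^ 2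
        * ∑ m ∈ Finset.range M, ∑ k ∈ Finset.range K,
            ∫ ω, ‖y (m * K + k) ω - z ((m * K + k) / K * K) ω‖ ^ 2 ∂μ :=
        (Finset.mul_sum _ _ _).symm
    _ = (∑ k ∈ Finset.range K, γ (ι k) ^ 2) * Lmax ^ 2 * S := by
        rw [← hblock (fun t => ∫ ω, ‖y t ω - z (t / K * K) ω‖ ^ 2 ∂μ) M]
    _ ≤ (∑ k ∈ Finset.range K, γ (ι k) ^ 2) * Lmax ^ 2
        * (2 * (K : ℝ) ^ 2 * (M : ℝ) * (∑ k ∈ Finset.range K, γ (ι k) ^ 2)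
            * (σ ^ 2 + ζ ^ 2)
          + 4 * (K : ℝ) ^ 2 * ρ ^ 2 * (∑ k ∈ Finset.range K, γ (ι k) ^ 2)
            * ∑ m ∈ Finset.range M, ∫ ω, ‖gradient F (z (m * K) ω)‖ ^ 2 ∂μ) :=
        mul_le_mul_of_nonneg_left hS2 (mul_nonneg hAnn (sq_nonneg _))
    _ = 2 * (∑ k ∈ Finset.range K, γ (ι k) ^ 2) ^ 2 * (K : ℝ) ^ 2 * Lmax ^ 2 * M *
          (σ ^ 2 + ζ ^ 2)
        + 4 * (∑ k ∈ Finset.range K, γ (ι k) ^ 2) ^ 2 * (K : ℝ) ^ 2 * Lmax ^ 2 * ρ ^ 2 *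
            ∑ m ∈ Finset.range M, ∫ ω, ‖gradient F (z (m * K) ω)‖ ^ 2 ∂μ := by
        ring
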